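/- The sequence a*_n = 2·T_n / 4^n, where T_n = (1/n)·sum_{d|n} binomial(2d-1,d)·φ(n/d), satisfies a*_n ~ 1/(√π · n^{3/2}) as n → ∞; in particular, a*_n is regularly varying with index −3/2. -/

import Mathlib

open Finset Filter Topology

noncomputable section

/-- number of size-`k` submultisets of `{0,…,n-1}` whose sum is ≡ 0 mod `n` -/
def symCount (n k : ℕ) : ℕ :=
  Nat.card {s : Sym (Fin n) k // ((s : Multiset (Fin n)).map Fin.val).sum % n = 0}

/-- `T n`: number of size-`n` submultisets of `{0,…,n-1}` summing to `0` mod `n`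
(= number of rooted unlabelled cyclically distinct plane trees with `n` edges). -/
def planeTreeT (n : ℕ) : ℕ := symCount n n

/-- Walkup's formula expression `(1/n) ∑_{d ∣ n} C(2d-1, d) φ(n/d)` (exact division). -/
def walkupT (n : ℕ) : ℕ :=
  (∑ d ∈ n.divisors, Nat.choose (2 * d - 1) d * Nat.totient (n / d)) / n

/-- number of up-steps strictly before position `i` in a monotone lattice path
encoded by `f : Fin m → Bool` (`true` = up-step, `false` = right-step). -/
def upsBefore {m : ℕ} (f : Fin m → Bool) (i : Fin m) : ℕ :=
  Nat.card {j : Fin m // j < i ∧ f j = true}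

/-- area below/right of a monotone lattice path: sum over right-steps of the
number of up-steps before them. -/
def pathArea {m : ℕ} (f : Fin m → Bool) : ℕ :=
  ∑ i : Fin m, if f i = false then upsBefore f i else 0

/-- number of up-steps of a monotone lattice path. -/
def upCount {m : ℕ} (f : Fin m → Bool) : ℕ := Nat.card {i : Fin m // f i = true}

/-- the `m`-th increment (`±1`) of a walk of length `2n` encoded by
`ε : Fin (2n) → Bool` (`true` = `+1`); `0` out of range. -/
def stepVal (n : ℕ) (ε : Fin (2 * n) → Bool) (m : ℕ) : ℤ :=
  if h : m < 2 * n then (if ε ⟨m, h⟩ then 1 else -1) else 0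

/-- position of the walk after `k` steps. -/
def wpos (n : ℕ) (ε : Fin (2 * n) → Bool) (k : ℕ) : ℤ :=
  ∑ i ∈ Finset.range k, stepVal n ε i

/-- a walk of length `2n` is a bridge if it returns to `0`. -/
def IsBridge (n : ℕ) (ε : Fin (2 * n) → Bool) : Prop := wpos n ε (2 * n) = 0

/-- partial diamond area `σ_{2k} = (1/2) ∑_{i=1}^k B_{2i}` (the division is exact). -/
def psig (n : ℕ) (ε : Fin (2 * n) → Bool) (k : ℕ) : ℤ :=
  (∑ i ∈ Finset.range k, wpos n ε (2 * (i + 1))) / 2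

/-- diamond area `σ(B) = (1/2) ∑_{i=1}^n B_{2i}`. -/
def dsigma (n : ℕ) (ε : Fin (2 * n) → Bool) : ℤ := psig n ε n

/-- a bridge is graphical if `σ(B) = 0` and `σ_{2k} ≥ 0` for all `1 ≤ k < n`. -/
def IsGraphical (n : ℕ) (ε : Fin (2 * n) → Bool) : Prop :=
  IsBridge n ε ∧ dsigma n ε = 0 ∧ ∀ k, 1 ≤ k → k < n → 0 ≤ psig n ε k

/-- `B_n`: the number of graphical bridges of length `2n`. -/
def graphicalCount (n : ℕ) : ℕ := Nat.card {ε : Fin (2 * n) → Bool // IsGraphical n ε}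

lemma two_choose_eq (n : ℕ) (hn : 1 ≤ n) :
    2 * Nat.choose (2 * n - 1) n = Nat.centralBinom n := by
  obtain ⟨m, rfl⟩ := Nat.exists_eq_add_of_le hn
  rw [Nat.centralBinom]
  have h1 : 2 * (1 + m) - 1 = 2 * m + 1 := by omega
  have h2 : 2 * (1 + m) = (2 * m + 1) + 1 := by omega
  have h3 : 1 + m = m + 1 := by omega
  have h5 : ((2 * m + 1) + 1).choose (m + 1) = (2 * m + 1).choose m + (2 * m + 1).choose (m + 1) :=
    Nat.choose_succ_succ (2 * m + 1) m
  rw [h1, h2, h3, h5]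
  have h4 : (2 * m + 1).choose m = (2 * m + 1).choose (m + 1) := by
    rw [← Nat.choose_symm (show m + 1 ≤ 2 * m + 1 by omega)]
    congr 1
    omega
  omega

lemma choose_le_two_pow' (d n : ℕ) (hd : 1 ≤ d) (h2d : 2 * d ≤ n) :
    Nat.choose (2 * d - 1) d ≤ 2 ^ n := by
  obtain ⟨m, rfl⟩ := Nat.exists_eq_add_of_le hd
  have h1 : 2 * (1 + m) - 1 = 2 * m + 1 := by omega
  have h3 : 1 + m = m + 1 := by omega
  rw [h1, h3]
  calc (2 * m + 1).choose (m + 1) = (2 * m + 1).choose m := by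
        rw [← Nat.choose_symm (show m + 1 ≤ 2 * m + 1 by omega)]
        congr 1
        omega
    _ ≤ 4 ^ m := Nat.choose_middle_le_pow m
    _ = 2 ^ (2 * m) := by rw [pow_mul]; norm_num
    _ ≤ 2 ^ n := Nat.pow_le_pow_right (by norm_num) (by omega)

/-- the Walkup sum -/
def walkS (n : ℕ) : ℕ := ∑ d ∈ n.divisors, Nat.choose (2 * d - 1) d * Nat.totient (n / d)

lemma walkS_split (n : ℕ) (hn : 1 ≤ n) :
    walkS n = (∑ d ∈ n.divisors.erase n, Nat.choose (2 * d - 1) d * Nat.totient (n / d))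
      + Nat.choose (2 * n - 1) n := by
  rw [walkS, ← Finset.sum_erase_add _ _ (Nat.mem_divisors_self n (by omega))]
  rw [Nat.div_self (by omega : 0 < n), Nat.totient_one, mul_one]

lemma walkS_err (n : ℕ) (hn : 1 ≤ n) :
    (∑ d ∈ n.divisors.erase n, Nat.choose (2 * d - 1) d * Nat.totient (n / d))
      ≤ n * (2 ^ n * n) := by
  calc (∑ d ∈ n.divisors.erase n, Nat.choose (2 * d - 1) d * Nat.totient (n / d))
      ≤ (n.divisors.erase n).card • (2 ^ n * n) := by
        apply Finset.sum_le_card_nsmul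
        intro d hd
        obtain ⟨hdn, hdd⟩ := Finset.mem_erase.mp hd
        obtain ⟨hdvd, hn0⟩ := Nat.mem_divisors.mp hdd
        have hd1 : 1 ≤ d := Nat.pos_of_dvd_of_pos hdvd (by omega)
        have h2d : 2 * d ≤ n := by
          obtain ⟨k, rfl⟩ := hdvd
          have : 2 ≤ k := by
            rcases Nat.lt_or_ge k 2 with h | h
            · interval_cases k <;> omega
            · exact h
          nlinarith
        exact Nat.mul_le_mul (choose_le_two_pow' d n hd1 h2d)
          ((Nat.totient_le _).trans (Nat.div_le_self n d))
    _ ≤ n * (2 ^ n * n) := by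
        rw [smul_eq_mul]
        apply Nat.mul_le_mul_right
        calc (n.divisors.erase n).card ≤ n.divisors.card := Finset.card_erase_le.trans le_rfl
          _ ≤ (Finset.Icc 1 n).card := Finset.card_le_card (fun d hd => by
              obtain ⟨hdvd, hn0⟩ := Nat.mem_divisors.mp hd
              exact Finset.mem_Icc.mpr ⟨Nat.pos_of_dvd_of_pos hdvd (by omega),
                Nat.le_of_dvd (by omega) hdvd⟩)
          _ = n := by rw [Nat.card_Icc]; omega


lemma central_asymp :
    Tendsto (fun n : ℕ => (Nat.centralBinom n : ℝ) * (Real.sqrt Real.pi * Real.sqrt n) / 4 ^ n)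
      atTop (nhds 1) := by
  have hs := Stirling.tendsto_stirlingSeq_sqrt_pi
  have h2n : Tendsto (fun n : ℕ => 2 * n) atTop atTop :=
    tendsto_atTop_mono (fun n => Nat.le_mul_of_pos_left n two_pos) tendsto_id
  have hs2 : Tendsto (fun n : ℕ => Stirling.stirlingSeq (2 * n)) atTop (nhds (Real.sqrt Real.pi)) :=
    hs.comp h2n
  have hπ : (0:ℝ) < Real.sqrt Real.pi := Real.sqrt_pos.mpr Real.pi_pos
  have hlim : Tendsto (fun n : ℕ =>
      Stirling.stirlingSeq (2 * n) * Real.sqrt Real.pi / (Stirling.stirlingSeq n) ^ 2)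
      atTop (nhds 1) := by
    have := (hs2.mul (tendsto_const_nhds (x := Real.sqrt Real.pi))).div (hs.pow 2)
      (by positivity)
    convert this using 2
    · rfl
    · rw [← sq, div_self (pow_pos hπ 2).ne']
  apply hlim.congr'
  filter_upwards [eventually_ge_atTop 1] with n hn
  have hn0 : (0:ℝ) < n := by exact_mod_cast hn
  set s := Stirling.stirlingSeq with hsdef
  have hspos : ∀ k : ℕ, 1 ≤ k → 0 < s k := by
    intro k hk
    obtain ⟨m, rfl⟩ := Nat.exists_eq_add_of_le hk
    rw [show 1 + m = m + 1 by omega]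
    exact Stirling.stirlingSeq'_pos m
  have hfac : ∀ k : ℕ, 1 ≤ k →
      (Nat.factorial k : ℝ) = s k * (Real.sqrt (2 * k) * ((k : ℝ) / Real.exp 1) ^ k) := by
    intro k hk
    have hk0 : (0:ℝ) < k := by exact_mod_cast hk
    have h1 : (0:ℝ) < Real.sqrt (2 * k) := Real.sqrt_pos.mpr (by positivity)
    have h2 : (0:ℝ) < ((k : ℝ) / Real.exp 1) ^ k := by positivity
    rw [hsdef]
    unfold Stirling.stirlingSeq
    rw [div_mul_cancel₀]
    positivity
  -- abbreviations
  have hcb : (Nat.centralBinom n : ℝ) * ((Nat.factorial n : ℝ) * (Nat.factorial n : ℝ)) = (Nat.factorial (2 * n) : ℝ) := by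
    have := Nat.choose_mul_factorial_mul_factorial (show n ≤ 2 * n by omega)
    rw [show 2 * n - n = n by omega] at this
    rw [Nat.centralBinom]
    exact_mod_cast congrArg (Nat.cast (R := ℝ)) (by rw [← this]; ring)
  set B := Real.sqrt (2 * (n:ℝ)) with hB
  set C := ((n:ℝ) / Real.exp 1) ^ n with hC
  have hBB : B * B = 2 * n := Real.mul_self_sqrt (by positivity)
  have hCne : C ≠ 0 := by rw [hC]; positivity
  have e2 : (Nat.factorial n : ℝ) = s n * (B * C) := hfac n hn
  have e1 : (Nat.factorial (2 * n) : ℝ) = s (2 * n) * ((2 * Real.sqrt n) * (4 ^ n * C ^ 2)) := by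
    rw [hfac (2 * n) (by omega)]
    congr 1
    push_cast
    rw [show (2 : ℝ) * (2 * n) = 4 * n by ring]
    rw [show Real.sqrt (4 * n) = 2 * Real.sqrt n by
      rw [show (4:ℝ) = 2^2 by norm_num, Real.sqrt_mul (by positivity), Real.sqrt_sq (by norm_num)]]
    rw [show (2 * (n:ℝ)) / Real.exp 1 = 2 * ((n:ℝ) / Real.exp 1) by ring, mul_pow,
      show (2:ℝ) ^ (2 * n) = 4 ^ n by rw [pow_mul]; norm_num, hC, ← pow_mul, mul_comm n 2,
      pow_mul]
  -- main algebraic identity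
  have hsn := hspos n hn
  have hsqn : (0:ℝ) < Real.sqrt n := Real.sqrt_pos.mpr hn0
  have main : (Nat.centralBinom n : ℝ) * Real.sqrt n * (s n) ^ 2 = s (2 * n) * 4 ^ n := by
    have key : (Nat.centralBinom n : ℝ) * (s n) ^ 2 * (2 * n) * C ^ 2
        = s (2 * n) * (2 * Real.sqrt n) * 4 ^ n * C ^ 2 := by
      have h := hcb
      rw [e2, e1] at h
      linear_combination h - (Nat.centralBinom n : ℝ) * (s n) ^ 2 * C ^ 2 * hBB
    have key2 : (Nat.centralBinom n : ℝ) * (s n) ^ 2 * (2 * n)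
        = s (2 * n) * (2 * Real.sqrt n) * 4 ^ n :=
      mul_right_cancel₀ (pow_ne_zero 2 hCne) key
    apply mul_right_cancel₀ (show (2 * Real.sqrt n) ≠ 0 by positivity)
    calc (Nat.centralBinom n : ℝ) * Real.sqrt n * s n ^ 2 * (2 * Real.sqrt n)
        = (Nat.centralBinom n : ℝ) * s n ^ 2 * (2 * (Real.sqrt n * Real.sqrt n)) := by ring
      _ = (Nat.centralBinom n : ℝ) * s n ^ 2 * (2 * n) := by
          rw [Real.mul_self_sqrt hn0.le]
      _ = s (2 * n) * (2 * Real.sqrt n) * 4 ^ n := key2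
      _ = s (2 * n) * 4 ^ n * (2 * Real.sqrt n) := by ring
  -- conclude
  have h4 : (0:ℝ) < 4 ^ n := by positivity
  field_simp
  linear_combination (-1 : ℝ) * main


lemma astar_part1 :
    Tendsto (fun n : ℕ =>
        (2 * (walkupT n : ℝ) / 4 ^ n) * (Real.sqrt Real.pi * (n : ℝ) ^ ((3 : ℝ) / 2)))
      atTop (nhds 1) := by
  have hπ : (0:ℝ) ≤ Real.sqrt Real.pi := Real.sqrt_nonneg _
  have herr : Tendsto (fun n : ℕ => 4 * Real.sqrt Real.pi * ((n:ℝ) ^ 3 * (1/2 : ℝ) ^ n))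
      atTop (nhds 0) := by
    have h := tendsto_pow_const_mul_const_pow_of_lt_one 3 (by norm_num : (0:ℝ) ≤ 1/2)
      (by norm_num : (1:ℝ)/2 < 1)
    simpa using h.const_mul (4 * Real.sqrt Real.pi)
  set main : ℕ → ℝ := fun n =>
    (Nat.centralBinom n : ℝ) * (Real.sqrt Real.pi * Real.sqrt n) / 4 ^ n with hmain
  set err : ℕ → ℝ := fun n => 4 * Real.sqrt Real.pi * ((n:ℝ) ^ 3 * (1/2 : ℝ) ^ n) with herrdef
  have hlow : Tendsto (fun n => main n - err n) atTop (nhds 1) := by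
    simpa using central_asymp.sub herr
  have hup : Tendsto (fun n => main n + err n) atTop (nhds 1) := by
    simpa using central_asymp.add herr
  apply tendsto_of_tendsto_of_tendsto_of_le_of_le' hlow hup
  · filter_upwards [eventually_ge_atTop 1] with n hn
    have hn0 : (0:ℝ) < n := by exact_mod_cast hn
    have hn1 : (1:ℝ) ≤ n := by exact_mod_cast hn
    have h4 : (0:ℝ) < 4 ^ n := by positivity
    have hsq : (0:ℝ) ≤ Real.sqrt n := Real.sqrt_nonneg _
    have hsqle : Real.sqrt n ≤ n := by
      nlinarith [Real.sq_sqrt hn0.le, Real.sqrt_nonneg (n:ℝ)]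
    have h2p : (1:ℝ) ≤ 2 ^ n := one_le_pow₀ (by norm_num)
    have hr32 : (n:ℝ) ^ ((3:ℝ)/2) = n * Real.sqrt n := by
      rw [show ((3:ℝ)/2) = 1 + 1/2 by norm_num, Real.rpow_add hn0, Real.rpow_one,
        ← Real.sqrt_eq_rpow]
    set C := Nat.choose (2 * n - 1) n with hCdef
    have hwalk : walkupT n = walkS n / n := rfl
    have hSle : walkS n ≤ C + n * (2 ^ n * n) := by
      rw [walkS_split n hn]; have := walkS_err n hn; omega
    have h2r : (C:ℝ) < (walkupT n : ℝ) * n + n := by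
      have h1 : walkS n < walkS n / n * n + n := Nat.lt_div_mul_add (by omega)
      have h2 : C < walkupT n * n + n := by
        rw [hwalk]; have : C ≤ walkS n := by rw [walkS_split n hn]; omega
        omega
      exact_mod_cast h2
    have hcb : (Nat.centralBinom n : ℝ) = 2 * C := by
      exact_mod_cast (two_choose_eq n hn).symm
    have h12 : (1/2:ℝ)^n = 2^n/4^n := by
      rw [show (1/2:ℝ) = 2/4 by norm_num, div_pow]
    have hfl : main n - err n
        = (2*(C:ℝ)*(Real.sqrt Real.pi*Real.sqrt n) - 4*Real.sqrt Real.pi*((n:ℝ)^3*2^n)) / 4^n := by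
      rw [hmain, herrdef]
      simp only []
      rw [hcb, h12]
      field_simp
    rw [hr32, hfl, show 2*(walkupT n:ℝ)/4^n*(Real.sqrt Real.pi*((n:ℝ)*Real.sqrt n))
      = (2*(walkupT n:ℝ)*(Real.sqrt Real.pi*((n:ℝ)*Real.sqrt n)))/4^n by ring]
    rw [div_le_div_iff_of_pos_right h4]
    have k1 : (C:ℝ) * (2*Real.sqrt Real.pi*Real.sqrt n)
        ≤ ((walkupT n:ℝ)*n+n) * (2*Real.sqrt Real.pi*Real.sqrt n) :=
      mul_le_mul_of_nonneg_right h2r.le (by positivity)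
    have k2 : 2*Real.sqrt Real.pi*((n:ℝ)*Real.sqrt n) ≤ 4*Real.sqrt Real.pi*((n:ℝ)^3*2^n) := by
      have h5 : (1:ℝ) ≤ 2*(n:ℝ)*2^n := by
        nlinarith [mul_le_mul_of_nonneg_left h2p hn0.le]
      have k3 := mul_le_mul_of_nonneg_left h5
        (by positivity : (0:ℝ) ≤ 2*Real.sqrt Real.pi*((n:ℝ)*(n:ℝ)))
      nlinarith [mul_le_mul_of_nonneg_left hsqle
        (by positivity : (0:ℝ) ≤ 2*Real.sqrt Real.pi*(n:ℝ)), k3]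
    calc 2*(C:ℝ)*(Real.sqrt Real.pi*Real.sqrt n) - 4*Real.sqrt Real.pi*((n:ℝ)^3*2^n)
        ≤ 2*(C:ℝ)*(Real.sqrt Real.pi*Real.sqrt n) - 2*Real.sqrt Real.pi*((n:ℝ)*Real.sqrt n) := by
          linarith [k2]
      _ = (C:ℝ)*(2*Real.sqrt Real.pi*Real.sqrt n) - 2*Real.sqrt Real.pi*((n:ℝ)*Real.sqrt n) := by
          ring
      _ ≤ ((walkupT n:ℝ)*(n:ℝ)+(n:ℝ))*(2*Real.sqrt Real.pi*Real.sqrt n)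
          - 2*Real.sqrt Real.pi*((n:ℝ)*Real.sqrt n) := by linarith [k1]
      _ = 2*(walkupT n:ℝ)*(Real.sqrt Real.pi*((n:ℝ)*Real.sqrt n)) := by ring
  · filter_upwards [eventually_ge_atTop 1] with n hn
    have hn0 : (0:ℝ) < n := by exact_mod_cast hn
    have hn1 : (1:ℝ) ≤ n := by exact_mod_cast hn
    have h4 : (0:ℝ) < 4 ^ n := by positivity
    have hsq : (0:ℝ) ≤ Real.sqrt n := Real.sqrt_nonneg _
    have hsqle : Real.sqrt n ≤ n := by
      nlinarith [Real.sq_sqrt hn0.le, Real.sqrt_nonneg (n:ℝ)]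
    have h2p : (0:ℝ) ≤ 2 ^ n := by positivity
    have hr32 : (n:ℝ) ^ ((3:ℝ)/2) = n * Real.sqrt n := by
      rw [show ((3:ℝ)/2) = 1 + 1/2 by norm_num, Real.rpow_add hn0, Real.rpow_one,
        ← Real.sqrt_eq_rpow]
    set C := Nat.choose (2 * n - 1) n with hCdef
    have hwalk : walkupT n = walkS n / n := rfl
    have hSle : walkS n ≤ C + n * (2 ^ n * n) := by
      rw [walkS_split n hn]; have := walkS_err n hn; omega
    have hwn : (walkupT n : ℝ) * n ≤ (C:ℝ) + (n:ℝ) * (2^n * n) := by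
      have h1 : walkupT n * n ≤ walkS n := by rw [hwalk]; exact Nat.div_mul_le_self _ _
      have h2 : walkupT n * n ≤ C + n * (2^n * n) := h1.trans hSle
      exact_mod_cast h2
    have hcb : (Nat.centralBinom n : ℝ) = 2 * C := by
      exact_mod_cast (two_choose_eq n hn).symm
    have h12 : (1/2:ℝ)^n = 2^n/4^n := by
      rw [show (1/2:ℝ) = 2/4 by norm_num, div_pow]
    have hfu : main n + err n
        = (2*(C:ℝ)*(Real.sqrt Real.pi*Real.sqrt n) + 4*Real.sqrt Real.pi*((n:ℝ)^3*2^n)) / 4^n := by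
      rw [hmain, herrdef]
      simp only []
      rw [hcb, h12]
      field_simp
    rw [hr32, hfu, show 2*(walkupT n:ℝ)/4^n*(Real.sqrt Real.pi*((n:ℝ)*Real.sqrt n))
      = (2*(walkupT n:ℝ)*(Real.sqrt Real.pi*((n:ℝ)*Real.sqrt n)))/4^n by ring]
    rw [div_le_div_iff_of_pos_right h4]
    have k1 : ((walkupT n:ℝ)*n) * (2*Real.sqrt Real.pi*Real.sqrt n)
        ≤ ((C:ℝ) + (n:ℝ)*(2^n*n)) * (2*Real.sqrt Real.pi*Real.sqrt n) :=
      mul_le_mul_of_nonneg_right hwn (by positivity)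
    have k2 : 2*Real.sqrt Real.pi*Real.sqrt n*((n:ℝ)*(2^n*n))
        ≤ 4*Real.sqrt Real.pi*((n:ℝ)^3*2^n) := by
      nlinarith [mul_le_mul_of_nonneg_left hsqle
        (by positivity : (0:ℝ) ≤ 2*Real.sqrt Real.pi*((n:ℝ)*(2^n*(n:ℝ)))),
        mul_nonneg hπ (by positivity : (0:ℝ) ≤ (n:ℝ)^3*2^n)]
    calc 2*(walkupT n:ℝ)*(Real.sqrt Real.pi*((n:ℝ)*Real.sqrt n))
        = ((walkupT n:ℝ)*(n:ℝ))*(2*Real.sqrt Real.pi*Real.sqrt n) := by ring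
      _ ≤ ((C:ℝ) + (n:ℝ)*(2^n*(n:ℝ)))*(2*Real.sqrt Real.pi*Real.sqrt n) := k1
      _ = 2*(C:ℝ)*(Real.sqrt Real.pi*Real.sqrt n)
          + 2*Real.sqrt Real.pi*Real.sqrt n*((n:ℝ)*(2^n*(n:ℝ))) := by ring
      _ ≤ 2*(C:ℝ)*(Real.sqrt Real.pi*Real.sqrt n) + 4*Real.sqrt Real.pi*((n:ℝ)^3*2^n) := by
          linarith [k2]


lemma astar_part2 (x : ℝ) (hx : 0 < x) :
    Tendsto (fun n : ℕ =>
        (2 * (walkupT ⌊x * n⌋₊ : ℝ) / 4 ^ ⌊x * n⌋₊) / (2 * (walkupT n : ℝ) / 4 ^ n))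
      atTop (nhds (Real.rpow x (-(3 : ℝ) / 2))) := by
  set A : ℕ → ℝ := fun n =>
    (2 * (walkupT n : ℝ) / 4 ^ n) * (Real.sqrt Real.pi * (n : ℝ) ^ ((3 : ℝ) / 2)) with hA
  have hxn : Tendsto (fun n : ℕ => x * n) atTop atTop :=
    Tendsto.const_mul_atTop hx tendsto_natCast_atTop_atTop
  have tm : Tendsto (fun n : ℕ => ⌊x * n⌋₊) atTop atTop :=
    tendsto_nat_floor_atTop.comp hxn
  have tAm : Tendsto (fun n : ℕ => A ⌊x * n⌋₊) atTop (nhds 1) := astar_part1.comp tm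
  -- ratio of indices
  have tfl : Tendsto (fun n : ℕ => (⌊x * n⌋₊ : ℝ) / (x * n)) atTop (nhds 1) :=
    tendsto_nat_floor_div_atTop.comp hxn
  have tratio : Tendsto (fun n : ℕ => (⌊x * n⌋₊ : ℝ) / n) atTop (nhds x) := by
    have h := tfl.mul (tendsto_const_nhds (x := x))
    rw [one_mul] at h
    apply h.congr'
    filter_upwards [eventually_ge_atTop 1] with n hn
    have hn0 : (0:ℝ) < n := by exact_mod_cast hn
    field_simp
  have tinv : Tendsto (fun n : ℕ => (n : ℝ) / (⌊x * n⌋₊ : ℝ)) atTop (nhds x⁻¹) := by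
    have h := tratio.inv₀ (ne_of_gt hx)
    simpa [inv_div] using h
  have trpow : Tendsto (fun n : ℕ => ((n : ℝ) / (⌊x * n⌋₊ : ℝ)) ^ ((3:ℝ)/2))
      atTop (nhds (x⁻¹ ^ ((3:ℝ)/2))) :=
    tinv.rpow_const (Or.inr (by norm_num))
  have key : Tendsto (fun n : ℕ =>
      A ⌊x * n⌋₊ / A n * ((n : ℝ) / (⌊x * n⌋₊ : ℝ)) ^ ((3:ℝ)/2))
      atTop (nhds (1 / 1 * x⁻¹ ^ ((3:ℝ)/2))) :=
    (tAm.div astar_part1 one_ne_zero).mul trpow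
  have hval : 1 / 1 * x⁻¹ ^ ((3:ℝ)/2) = Real.rpow x (-(3:ℝ)/2) := by
    rw [Real.inv_rpow hx.le, ← Real.rpow_neg hx.le]
    norm_num
  rw [hval] at key
  apply key.congr'
  have hApos : ∀ᶠ n : ℕ in atTop, (1:ℝ)/2 < A n :=
    astar_part1.eventually (eventually_gt_nhds (by norm_num))
  filter_upwards [hApos, tm.eventually hApos, eventually_ge_atTop 1,
    tm.eventually (eventually_ge_atTop 1)] with n h1 h2 h3 h4
  set m := ⌊x * n⌋₊ with hm
  have hn0 : (0:ℝ) < n := by exact_mod_cast h3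
  have hm0 : (0:ℝ) < m := by exact_mod_cast h4
  have hπ : (0:ℝ) < Real.sqrt Real.pi := Real.sqrt_pos.mpr Real.pi_pos
  have hnr : (0:ℝ) < (n:ℝ) ^ ((3:ℝ)/2) := Real.rpow_pos_of_pos hn0 _
  have hmr : (0:ℝ) < (m:ℝ) ^ ((3:ℝ)/2) := Real.rpow_pos_of_pos hm0 _
  have h4n : (0:ℝ) < 4 ^ n := by positivity
  have h4m : (0:ℝ) < 4 ^ m := by positivity
  have han : (0:ℝ) < 2 * (walkupT n : ℝ) / 4 ^ n := by
    by_contra h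
    push_neg at h
    have : A n ≤ 0 := mul_nonpos_of_nonpos_of_nonneg h (by positivity)
    linarith
  have hdiv : ((n:ℝ) / (m:ℝ)) ^ ((3:ℝ)/2) = (n:ℝ) ^ ((3:ℝ)/2) / (m:ℝ) ^ ((3:ℝ)/2) :=
    Real.div_rpow hn0.le hm0.le _
  have hwn : (walkupT n : ℝ) ≠ 0 := by
    intro h
    rw [h] at han
    simp at han
  rw [hA]
  simp only []
  rw [hdiv]
  field_simp


theorem astar_asymptotics :
    Tendsto (fun n : ℕ =>
        (2 * (walkupT n : ℝ) / 4 ^ n) * (Real.sqrt Real.pi * (n : ℝ) ^ ((3 : ℝ) / 2)))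
      atTop (nhds 1) ∧
    ∀ x : ℝ, 0 < x →
      Tendsto (fun n : ℕ =>
          (2 * (walkupT ⌊x * n⌋₊ : ℝ) / 4 ^ ⌊x * n⌋₊) / (2 * (walkupT n : ℝ) / 4 ^ n))
        atTop (nhds (Real.rpow x (-(3 : ℝ) / 2))) := by
  exact ⟨astar_part1, astar_part2⟩
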